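/- Let n = lcm(ℓ, s), g = gcd(ℓ, s), k = F_{q^n}, and let Δ = k(τ) be the central division algebra over K = F_q(π) with π = τ^n and τα = α^q τ. Let Δ(ℓ,s) = F_{q^ℓ}(τ^s) ⊆ Δ. Then the center of Δ(ℓ,s) is K_g = F_{q^g}(π). -/

import Mathlib

open Finset Pointwise

namespace CenterDeltaLS

lemma pow_sub_one_dvd_aux {q l i : ℕ} (h : l ∣ i) : q ^ l - 1 ∣ q ^ i - 1 := by
  obtain ⟨c, rfl⟩ := h
  rw [pow_mul]
  simpa using Nat.sub_dvd_pow_sub_pow (q ^ l) 1 c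

lemma dvd_of_pow_sub_one_dvd {q l i : ℕ} (hq : 1 < q) (hl : 0 < l)
    (h : q ^ l - 1 ∣ q ^ i - 1) : l ∣ i := by
  have hr : i % l < l := Nat.mod_lt _ hl
  have hA : q ^ i = q ^ (i % l) * q ^ (l * (i / l)) := by
    rw [← pow_add]
    congr 1
    conv_lhs => rw [← Nat.div_add_mod i l]
    ring
  have hd1 : q ^ l - 1 ∣ q ^ (l * (i / l)) - 1 := pow_sub_one_dvd_aux ⟨_, rfl⟩
  have hd2 : q ^ l - 1 ∣ q ^ i - q ^ (i % l) := by
    have : q ^ i - q ^ (i % l) = q ^ (i % l) * (q ^ (l * (i / l)) - 1) := by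
      rw [Nat.mul_sub, mul_one, ← hA]
    rw [this]
    exact Dvd.dvd.mul_left hd1 _
  have hB1 : 1 ≤ q ^ (i % l) := Nat.one_le_pow _ _ (by omega)
  have hBA : q ^ (i % l) ≤ q ^ i := Nat.pow_le_pow_right (by omega) (Nat.mod_le i l)
  have hd3 : q ^ l - 1 ∣ q ^ (i % l) - 1 := by
    have : q ^ (i % l) - 1 = (q ^ i - 1) - (q ^ i - q ^ (i % l)) := by omega
    rw [this]
    exact Nat.dvd_sub h hd2
  have hlt : q ^ (i % l) < q ^ l := Nat.pow_lt_pow_right hq hr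
  have h0 : q ^ (i % l) - 1 = 0 := Nat.eq_zero_of_dvd_of_lt hd3 (by omega)
  have : q ^ (i % l) = 1 := by omega
  have : i % l = 0 := by
    by_contra h'
    have : 1 < q ^ (i % l) := Nat.one_lt_pow h' hq
    omega
  exact Nat.dvd_of_mod_eq_zero this

variable {q n : ℕ} {k Δ : Type} [Field k] [Fintype k] [DivisionRing Δ]

lemma tau_pow_comm (ι : k →+* Δ) (τ : Δ) (hcomm : ∀ a : k, τ * ι a = ι (a ^ q) * τ)
    (i : ℕ) (a : k) : τ ^ i * ι a = ι (a ^ q ^ i) * τ ^ i := by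
  induction i generalizing a with
  | zero => simp
  | succ i ih =>
    calc τ ^ (i + 1) * ι a = τ ^ i * (τ * ι a) := by rw [pow_succ, mul_assoc]
    _ = τ ^ i * ι (a ^ q) * τ := by rw [hcomm, mul_assoc]
    _ = ι ((a ^ q) ^ q ^ i) * τ ^ i * τ := by rw [ih (a ^ q)]
    _ = ι (a ^ q ^ (i + 1)) * τ ^ (i + 1) := by
        rw [mul_assoc, ← pow_succ, ← pow_mul, ← pow_succ']

lemma extract (hq : 1 < q) (hn : 0 < n) (hk : Fintype.card k = q ^ n)
    (ι : k →+* Δ) (τ : Δ) (hτ : τ ≠ 0)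
    (hcomm : ∀ a : k, τ * ι a = ι (a ^ q) * τ)
    (c : Fin n → Δ) (hc : ∀ (i : Fin n) (a : k), c i * ι a = ι a * c i)
    (hsum : ∑ i, c i * τ ^ (i : ℕ) = 0) : ∀ j, c j = 0 := by
  classical
  intro j
  obtain ⟨N, hN⟩ : ∃ N, q ^ n - 1 = N := ⟨_, rfl⟩
  have hqn1 : 1 < q ^ n := Nat.one_lt_pow hn.ne' hq
  have hNpos : 0 < N := by omega
  have hcardu : Fintype.card kˣ = N := by rw [Fintype.card_units, hk, hN]
  have hexp : ∀ i : Fin n, q ^ (i : ℕ) ≤ N := by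
    intro i
    have h1 : (i : ℕ) ≤ n - 1 := by have := i.isLt; omega
    have h2 : q ^ (i : ℕ) ≤ q ^ (n - 1) := Nat.pow_le_pow_right (by omega) h1
    have h3 : q ^ (n - 1) < q ^ n := Nat.pow_lt_pow_right hq (by omega)
    omega
  have hS : ∀ i : Fin n,
      (∑ u : kˣ, ((u : k) ^ q ^ (j : ℕ) * ((u⁻¹ : kˣ) : k) ^ q ^ (i : ℕ)))
        = if i = j then -1 else 0 := by
    intro i
    obtain ⟨m, hm⟩ : ∃ m, q ^ (j : ℕ) + N - q ^ (i : ℕ) = m := ⟨_, rfl⟩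
    have hmi : m + q ^ (i : ℕ) = q ^ (j : ℕ) + N := by have h1 := hexp i; omega
    have huu : ∀ u : kˣ, (u : k) ^ q ^ (j : ℕ) * ((u⁻¹ : kˣ) : k) ^ q ^ (i : ℕ)
        = ((u ^ m : kˣ) : k) := by
      intro u
      have h1 : u ^ m * u ^ q ^ (i : ℕ) = u ^ q ^ (j : ℕ) := by
        rw [← pow_add, hmi, pow_add]
        have hu1 : u ^ N = 1 := by rw [← hcardu]; exact pow_card_eq_one
        rw [hu1, mul_one]
      have h2 : (u ^ m : kˣ) = u ^ q ^ (j : ℕ) * (u ^ q ^ (i : ℕ))⁻¹ := by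
        rw [← h1, mul_assoc, mul_inv_cancel, mul_one]
      rw [h2]
      push_cast [← inv_pow]
      ring
    have hsum2 : (∑ u : kˣ, ((u : k) ^ q ^ (j : ℕ) * ((u⁻¹ : kˣ) : k) ^ q ^ (i : ℕ)))
        = ∑ u : kˣ, (u : k) ^ m := by
      refine Finset.sum_congr rfl fun u _ => ?_
      rw [huu u, Units.val_pow_eq_pow_val]
    rw [hsum2, FiniteField.sum_pow_units, hk, hN]
    by_cases hij : i = j
    · subst hij
      have : m = N := by omega
      simp [this]
    · have hmN : m ≠ N := by
        intro hEq
        apply hij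
        have : q ^ (i : ℕ) = q ^ (j : ℕ) := by omega
        exact Fin.ext (Nat.pow_right_injective (by omega) this)
      have hm0 : 0 < m := by
        have h1 : 1 ≤ q ^ (j : ℕ) := Nat.one_le_pow _ _ (by omega)
        have := hexp i; omega
      have hmlt : m < 2 * N := by
        have h1 := hexp j
        have h3 : 1 ≤ q ^ (i : ℕ) := Nat.one_le_pow _ _ (by omega)
        omega
      have hnd : ¬ N ∣ m := by
        rintro ⟨t, ht⟩
        have hcase : t = 0 ∨ t = 1 ∨ 2 ≤ t := by omega
        rcases hcase with h' | h' | h'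
        · rw [h'] at ht; omega
        · rw [h'] at ht; omega
        · have h2 : N * 2 ≤ N * t := Nat.mul_le_mul_left N h'
          omega
      rw [if_neg hij, if_neg hnd]
  have h0 : ∑ u : kˣ, ι ((u : k) ^ q ^ (j : ℕ)) * ((∑ i, c i * τ ^ (i : ℕ)) * ι ((u⁻¹ : kˣ) : k)) = 0 := by
    rw [hsum]
    simp
  have hterm : ∀ u : kˣ, ι ((u : k) ^ q ^ (j : ℕ)) * ((∑ i, c i * τ ^ (i : ℕ)) * ι ((u⁻¹ : kˣ) : k))
      = ∑ i, c i * ι ((u : k) ^ q ^ (j : ℕ) * ((u⁻¹ : kˣ) : k) ^ q ^ (i : ℕ)) * τ ^ (i : ℕ) := by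
    intro u
    rw [Finset.sum_mul, Finset.mul_sum]
    refine Finset.sum_congr rfl fun i _ => ?_
    calc ι ((u : k) ^ q ^ (j : ℕ)) * (c i * τ ^ (i : ℕ) * ι ((u⁻¹ : kˣ) : k))
        = ι ((u : k) ^ q ^ (j : ℕ)) * (c i * (ι (((u⁻¹ : kˣ) : k) ^ q ^ (i : ℕ)) * τ ^ (i : ℕ))) := by
          rw [mul_assoc (c i), tau_pow_comm ι τ hcomm]
      _ = ι ((u : k) ^ q ^ (j : ℕ)) * c i * ι (((u⁻¹ : kˣ) : k) ^ q ^ (i : ℕ)) * τ ^ (i : ℕ) := by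
          rw [← mul_assoc, ← mul_assoc]
      _ = c i * ι ((u : k) ^ q ^ (j : ℕ)) * ι (((u⁻¹ : kˣ) : k) ^ q ^ (i : ℕ)) * τ ^ (i : ℕ) := by
          rw [hc i]
      _ = c i * ι ((u : k) ^ q ^ (j : ℕ) * ((u⁻¹ : kˣ) : k) ^ q ^ (i : ℕ)) * τ ^ (i : ℕ) := by
          rw [map_mul, mul_assoc (c i)]
  have h1 : ∑ i, c i * ι (∑ u : kˣ, ((u : k) ^ q ^ (j : ℕ) * ((u⁻¹ : kˣ) : k) ^ q ^ (i : ℕ))) * τ ^ (i : ℕ) = 0 := by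
    rw [← h0]
    rw [Finset.sum_congr rfl fun u _ => hterm u, Finset.sum_comm]
    refine Finset.sum_congr rfl fun i _ => ?_
    rw [map_sum, Finset.mul_sum, Finset.sum_mul]
  rw [Finset.sum_congr rfl fun i (_ : i ∈ Finset.univ) => by rw [hS i]] at h1
  rw [Finset.sum_eq_single j (fun i _ hij => by rw [if_neg hij, map_zero, mul_zero, zero_mul])
    (fun h => absurd (Finset.mem_univ j) h)] at h1
  rw [if_pos rfl, map_neg, map_one, mul_neg_one, neg_mul, neg_eq_zero] at h1
  exact (mul_eq_zero.mp h1).resolve_right (pow_ne_zero _ hτ)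


lemma mem_repr {ℓ s : ℕ} (hq : 1 < q) (hn : 0 < n) (hk : Fintype.card k = q ^ n)
    (ι : k →+* Δ) (τ : Δ)
    (hcomm : ∀ a : k, τ * ι a = ι (a ^ q) * τ)
    (hπc : τ ^ n ∈ Subring.center Δ)
    (hsn : s ∣ n)
    {x : Δ} (hx : x ∈ Subfield.closure ((ι '' {a : k | a ^ q ^ ℓ = a}) ∪ {τ ^ s})) :
    ∃ c : Fin n → Δ,
      (∀ i : Fin n, c i ∈ Submodule.span (Subring.center Δ) (ι '' {a : k | a ^ q ^ ℓ = a})) ∧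
      (∀ i : Fin n, ¬ (s ∣ (i : ℕ)) → c i = 0) ∧ x = ∑ i, c i * τ ^ (i : ℕ) := by
  classical
  haveI : NeZero n := ⟨hn.ne'⟩
  set C := Subring.center Δ with hC
  set F : Set k := {a | a ^ q ^ ℓ = a} with hF
  have hF1 : (1 : k) ∈ F := by simp [hF]
  have hFmul : ∀ a b : k, a ∈ F → b ∈ F → a * b ∈ F := by
    intro a b ha hb
    simp only [hF, Set.mem_setOf_eq, mul_pow] at *
    rw [ha, hb]
  have hFpow : ∀ (a : k) (t : ℕ), a ∈ F → a ^ q ^ t ∈ F := by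
    intro a t ha
    simp only [hF, Set.mem_setOf_eq] at *
    rw [pow_right_comm, ha]
  set GA : Set Δ := (fun p : k × Fin n => ι p.1 * τ ^ ((p.2 : ℕ))) ''
    {p : k × Fin n | p.1 ∈ F ∧ s ∣ (p.2 : ℕ)} with hGA
  set M := Submodule.span C GA with hM
  have hτn_comm : ∀ y : Δ, y * τ ^ n = τ ^ n * y := fun y =>
    (Subring.mem_center_iff.mp hπc y)
  have hgen_mem : ∀ (b : k) (i : Fin n), b ∈ F → s ∣ (i : ℕ) → ι b * τ ^ (i : ℕ) ∈ M :=
    fun b i hb hi => Submodule.subset_span ⟨(b, i), ⟨hb, hi⟩, rfl⟩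
  have hprod : ∀ (b b' : k) (i j : ℕ),
      (ι b * τ ^ i) * (ι b' * τ ^ j) = ι (b * b' ^ q ^ i) * τ ^ (i + j) := by
    intro b b' i j
    calc (ι b * τ ^ i) * (ι b' * τ ^ j) = ι b * (τ ^ i * ι b') * τ ^ j := by
          simp only [mul_assoc]
      _ = ι b * (ι (b' ^ q ^ i) * τ ^ i) * τ ^ j := by rw [tau_pow_comm ι τ hcomm]
      _ = ι (b * b' ^ q ^ i) * τ ^ (i + j) := by
          rw [map_mul, pow_add]
          simp only [mul_assoc]
  have hmulM : ∀ x' y' : Δ, x' ∈ M → y' ∈ M → x' * y' ∈ M := by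
    have hGG : GA * GA ⊆ (M : Set Δ) := by
      rintro z hz
      rw [Set.mem_mul] at hz
      obtain ⟨z1, hz1, z2, hz2, rfl⟩ := hz
      obtain ⟨⟨b, i⟩, ⟨hbF, hbi⟩, rfl⟩ := hz1
      obtain ⟨⟨b', j⟩, ⟨hbF', hbj⟩, rfl⟩ := hz2
      rw [hprod]
      by_cases hlt : (i : ℕ) + (j : ℕ) < n
      · exact hgen_mem _ ⟨(i : ℕ) + (j : ℕ), hlt⟩ (hFmul _ _ hbF (hFpow _ _ hbF'))
          (Nat.dvd_add hbi hbj)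
      · have hin : (i : ℕ) + (j : ℕ) - n < n := by have := i.isLt; have := j.isLt; omega
        have hsplit : τ ^ ((i : ℕ) + (j : ℕ)) = τ ^ ((i : ℕ) + (j : ℕ) - n) * τ ^ n := by
          rw [← pow_add]
          congr 1
          omega
        rw [hsplit, ← mul_assoc, hτn_comm]
        exact Submodule.smul_mem _ (⟨τ ^ n, hπc⟩ : C)
          (hgen_mem _ ⟨_, hin⟩ (hFmul _ _ hbF (hFpow _ _ hbF'))
            (by simpa using Nat.dvd_sub (Nat.dvd_add hbi hbj) hsn))
    intro x' y' hx' hy'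
    have := Submodule.mul_mem_mul hx' hy'
    rw [hM, Submodule.span_mul_span] at this
    exact Submodule.span_le.mpr hGG this
  have h1M : (1 : Δ) ∈ M := by
    have := hgen_mem 1 0 hF1 (by simp)
    simpa using this
  have hxpowM : ∀ y : Δ, y ∈ M → ∀ t : ℕ, y ^ t ∈ M := by
    intro y hy t
    induction t with
    | zero => simpa using h1M
    | succ t ih => rw [pow_succ]; exact hmulM _ _ ih hy
  have hFG : M.FG := Submodule.fg_span ((Set.toFinite _).image _)
  have hinv_center : ∀ w : Δ, w ∈ C → w⁻¹ ∈ C := by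
    intro w hw
    rcases eq_or_ne w 0 with rfl | hw0
    · simpa using hw
    · rw [hC, Subring.mem_center_iff]
      intro g
      have hwc := Subring.mem_center_iff.mp hw
      calc g * w⁻¹ = w⁻¹ * (w * g) * w⁻¹ := by
            rw [← mul_assoc, inv_mul_cancel₀ hw0, one_mul]
        _ = w⁻¹ * (g * w) * w⁻¹ := by rw [hwc g]
        _ = w⁻¹ * g := by
            rw [← mul_assoc, mul_assoc (w⁻¹ * g), mul_inv_cancel₀ hw0, mul_one]
  have hinvM : ∀ y : Δ, y ∈ M → y⁻¹ ∈ M := by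
    intro y hy
    rcases eq_or_ne y 0 with rfl | hy0
    · simpa using M.zero_mem
    · have hint : IsIntegral C y :=
        IsIntegral.of_mem_of_fg (M.toSubalgebra h1M hmulM) hFG y hy
      obtain ⟨P, Pmonic, hP⟩ := hint
      have hrel : (∑ i ∈ Finset.range (P.natDegree + 1), P.coeff i • y ^ i) = 0 := by
        rw [← Polynomial.aeval_eq_sum_range, Polynomial.aeval_def]
        exact hP
      have key : ∀ d : ℕ, ∀ z : ℕ → C, z d = 1 →
          (∑ i ∈ Finset.range (d + 1), z i • y ^ i) = 0 → y⁻¹ ∈ M := by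
        intro d
        induction d with
        | zero =>
          intro z hz h0
          rw [Finset.sum_range_one, hz, pow_zero, one_smul] at h0
          exact absurd h0 one_ne_zero
        | succ d ih =>
          intro z hz h0
          rw [Finset.sum_range_succ'] at h0
          have e1 : ∀ i : ℕ, z (i + 1) • y ^ (i + 1) = (z (i + 1) • y ^ i) * y := by
            intro i
            rw [smul_mul_assoc, ← pow_succ]
          rw [Finset.sum_congr rfl (fun i _ => e1 i), ← Finset.sum_mul, pow_zero] at h0
          set w := ∑ i ∈ Finset.range (d + 1), z (i + 1) • y ^ i with hw
          by_cases hz0 : z 0 = 0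
          · have hwy : w * y = 0 := by
              rw [hz0, zero_smul, add_zero] at h0
              exact h0
            have hw0 : w = 0 := (mul_eq_zero.mp hwy).resolve_right hy0
            exact ih (fun i => z (i + 1)) hz hw0
          · have h2 : w * y = -((z 0 : Δ)) := by
              have h3 := eq_neg_of_add_eq_zero_left h0
              rw [h3]
              congr 1
              exact (mul_one _)
            have hα : (-((z 0 : Δ)))⁻¹ ∈ C := hinv_center _ (neg_mem (z 0).2)
            have hαne : (-((z 0 : Δ))) ≠ 0 := by
              simp only [ne_eq, neg_eq_zero, ZeroMemClass.coe_eq_zero]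
              exact hz0
            have hy' : y⁻¹ = (-((z 0 : Δ)))⁻¹ * w := by
              calc y⁻¹ = (-((z 0 : Δ)))⁻¹ * (w * y) * y⁻¹ := by
                    rw [h2, inv_mul_cancel₀ hαne, one_mul]
                _ = (-((z 0 : Δ)))⁻¹ * w * (y * y⁻¹) := by
                    rw [mul_assoc, mul_assoc, mul_assoc]
                _ = (-((z 0 : Δ)))⁻¹ * w := by rw [mul_inv_cancel₀ hy0, mul_one]
            rw [hy']
            have hwM : w ∈ M := Submodule.sum_mem _ fun i _ =>
              Submodule.smul_mem _ _ (hxpowM y hy i)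
            exact (Submodule.smul_mem _ (⟨_, hα⟩ : C) hwM : _)
      exact key P.natDegree (fun i => P.coeff i) Pmonic.coeff_natDegree hrel
  -- assemble subfield
  set SF : Subfield Δ :=
    { (M.toSubalgebra h1M hmulM).toSubring with
      inv_mem' := fun x hx => hinvM x hx } with hSF
  have hMSF : ∀ y : Δ, y ∈ SF ↔ y ∈ M := fun y => Iff.rfl
  have hclos : Subfield.closure ((ι '' F) ∪ {τ ^ s}) ≤ SF := by
    rw [Subfield.closure_le]
    rintro z (⟨a, ha, rfl⟩ | hz)
    · rw [SetLike.mem_coe, hMSF]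
      have := hgen_mem a 0 ha (by simp)
      simpa using this
    · rw [Set.mem_singleton_iff] at hz
      subst hz
      rw [SetLike.mem_coe, hMSF]
      have hsle : s ≤ n := Nat.le_of_dvd hn hsn
      rcases lt_or_eq_of_le hsle with hlt | heq
      · have := hgen_mem 1 ⟨s, hlt⟩ hF1 (by simp)
        simpa using this
      · subst heq
        have : τ ^ s = (⟨τ ^ s, hπc⟩ : C) • (1 : Δ) := by
          show τ ^ s = τ ^ s * 1
          rw [mul_one]
        rw [this]
        exact Submodule.smul_mem _ _ h1M
  have hxM : x ∈ M := (hMSF x).mp (hclos hx)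
  -- representation
  have hrepr : ∀ y : Δ, y ∈ M → ∃ c : Fin n → Δ,
      (∀ i : Fin n, c i ∈ Submodule.span C (ι '' F)) ∧
      (∀ i : Fin n, ¬ (s ∣ (i : ℕ)) → c i = 0) ∧ y = ∑ i, c i * τ ^ (i : ℕ) := by
    intro y hy
    refine Submodule.span_induction ?_ ?_ ?_ ?_ hy
    · rintro z ⟨⟨b, i0⟩, ⟨hbF, hbi⟩, rfl⟩
      refine ⟨fun i => if i = i0 then ι b else 0, fun i => ?_, fun i hi => ?_, ?_⟩
      · dsimp only
        by_cases h : i = i0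
        · rw [if_pos h]
          exact Submodule.subset_span ⟨b, hbF, rfl⟩
        · rw [if_neg h]
          exact Submodule.zero_mem _
      · dsimp only
        have hne : i ≠ i0 := by rintro rfl; exact hi hbi
        rw [if_neg hne]
      · symm
        rw [Finset.sum_eq_single i0 (fun i _ hne => by dsimp only; rw [if_neg hne, zero_mul])
          (fun h => absurd (Finset.mem_univ i0) h)]
        dsimp only
        rw [if_pos rfl]
    · exact ⟨fun _ => 0, fun i => Submodule.zero_mem _, fun i _ => rfl, by simp⟩
    · rintro y1 y2 - - ⟨c1, hc1, hs1, rfl⟩ ⟨c2, hc2, hs2, rfl⟩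
      refine ⟨c1 + c2, fun i => Submodule.add_mem _ (hc1 i) (hc2 i),
        fun i hi => by simp [hs1 i hi, hs2 i hi], ?_⟩
      rw [← Finset.sum_add_distrib]
      exact Finset.sum_congr rfl fun i _ => (add_mul _ _ _).symm
    · rintro z y1 - ⟨c1, hc1, hs1, rfl⟩
      refine ⟨fun i => (z : Δ) * c1 i, fun i => Submodule.smul_mem _ z (hc1 i),
        fun i hi => by simp [hs1 i hi], ?_⟩
      show (z : Δ) * _ = _
      rw [Finset.mul_sum]
      exact Finset.sum_congr rfl fun i _ => (mul_assoc _ _ _).symm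
  exact hrepr x hxM


def centralizerSubfield {Δ : Type} [DivisionRing Δ] (t : Δ) : Subfield Δ where
  carrier := {y | y * t = t * y}
  mul_mem' := by
    intro a b ha hb
    show a * b * t = t * (a * b)
    rw [mul_assoc, hb, ← mul_assoc, ha, mul_assoc]
  one_mem' := by
    show 1 * t = t * 1
    rw [one_mul, mul_one]
  add_mem' := by
    intro a b ha hb
    show (a + b) * t = t * (a + b)
    rw [add_mul, mul_add, ha, hb]
  zero_mem' := by
    show 0 * t = t * 0
    rw [zero_mul, mul_zero]
  neg_mem' := by
    intro a ha
    show -a * t = t * -a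
    rw [neg_mul, mul_neg, ha]
  inv_mem' := by
    intro a ha
    show a⁻¹ * t = t * a⁻¹
    rcases eq_or_ne a 0 with rfl | h0
    · rw [inv_zero, zero_mul, mul_zero]
    · have hat : a * t = t * a := ha
      calc a⁻¹ * t = a⁻¹ * (t * a) * a⁻¹ := by
            rw [mul_assoc, mul_assoc, mul_inv_cancel₀ h0, mul_one]
        _ = a⁻¹ * (a * t) * a⁻¹ := by rw [hat]
        _ = t * a⁻¹ := by rw [← mul_assoc, inv_mul_cancel₀ h0, one_mul]

lemma mem_centralizerSubfield {Δ : Type} [DivisionRing Δ] {t y : Δ} :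
    y ∈ centralizerSubfield t ↔ y * t = t * y := Iff.rfl

end CenterDeltaLS

open CenterDeltaLS in
/-- **Center of the subalgebra `Δ(ℓ,s) = F_{q^ℓ}(τ^s)` of `Δ = k(τ)`.**
Let `n = lcm(ℓ,s)`, `g = gcd(ℓ,s)`, `k = F_{q^n}`, and let `Δ = k(τ)` be the
central division algebra over `K = F_q(π)` (`π = τ^n`, `τ α = α^q τ`), i.e. the
division ring generated by `k` and `τ` with center `K`.  Then the center of the
division subalgebra `Δ(ℓ,s) = F_{q^ℓ}(τ^s)` is `K_g = F_{q^g}(π)`.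
(Subfields `F_{q^m} ⊆ k` are realized as `{a : k | a^{q^m} = a}`.) -/
theorem center_of_Delta_ls
    {q ℓ s n g : ℕ} (hq : 1 < q) (hℓ : 0 < ℓ) (hs : 0 < s)
    (hn : n = Nat.lcm ℓ s) (hg : g = Nat.gcd ℓ s)
    {k Δ : Type} [Field k] [Fintype k] (hk : Fintype.card k = q ^ n)
    [DivisionRing Δ] (ι : k →+* Δ) (τ : Δ) (hτ : τ ≠ 0)
    (hcomm : ∀ a : k, τ * ι a = ι (a ^ q) * τ)
    (hgen : Subfield.closure (Set.range ι ∪ {τ}) = ⊤)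
    (hZ : (Subring.center Δ : Set Δ) =
      ↑(Subfield.closure ((ι '' {a : k | a ^ q = a}) ∪ {τ ^ n}))) :
    {x : Δ | x ∈ Subfield.closure ((ι '' {a : k | a ^ q ^ ℓ = a}) ∪ {τ ^ s}) ∧
        ∀ y ∈ Subfield.closure ((ι '' {a : k | a ^ q ^ ℓ = a}) ∪ {τ ^ s}), y * x = x * y} =
      ↑(Subfield.closure ((ι '' {a : k | a ^ q ^ g = a}) ∪ {τ ^ n})) := by
  classical
  -- numerics
  have hn0 : 0 < n := by
    rw [hn]
    exact Nat.pos_of_ne_zero (Nat.lcm_ne_zero hℓ.ne' hs.ne')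
  haveI : NeZero n := ⟨hn0.ne'⟩
  have hℓn : ℓ ∣ n := hn ▸ Nat.dvd_lcm_left ℓ s
  have hsn : s ∣ n := hn ▸ Nat.dvd_lcm_right ℓ s
  have hgℓ : g ∣ ℓ := hg ▸ Nat.gcd_dvd_left ℓ s
  have hgs : g ∣ s := hg ▸ Nat.gcd_dvd_right ℓ s
  have hgn : g ∣ n := hgℓ.trans hℓn
  have hg0 : 0 < g := Nat.pos_of_ne_zero (fun h0 => by
    obtain ⟨h1, -⟩ := Nat.gcd_eq_zero_iff.mp (hg ▸ h0)
    omega)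
  have hfix : ∀ (a : k) (d t : ℕ), a ^ q ^ d = a → d ∣ t → a ^ q ^ t = a := by
    intro a d t ha hdt
    obtain ⟨u, rfl⟩ := hdt
    induction u with
    | zero => simp
    | succ u ih =>
      have : a ^ q ^ (d * (u + 1)) = (a ^ q ^ (d * u)) ^ q ^ d := by
        rw [← pow_mul, ← pow_add, mul_add, mul_one]
      rw [this, ih, ha]
  -- center facts
  have hπcen : τ ^ n ∈ Subring.center Δ := by
    have h1 : τ ^ n ∈ (Subfield.closure ((ι '' {a : k | a ^ q = a}) ∪ {τ ^ n}) : Set Δ) :=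
      Subfield.subset_closure (Or.inr rfl)
    rw [← hZ] at h1
    exact h1
  have hcen_comm : ∀ w : Δ, w ∈ Subring.center Δ → ∀ y, w * y = y * w :=
    fun w hw y => (Subring.mem_center_iff.mp hw y).symm
  have hτn_comm : ∀ y : Δ, y * τ ^ n = τ ^ n * y := fun y => Subring.mem_center_iff.mp hπcen y
  have hCZ : ∀ w : Δ, w ∈ Subring.center Δ →
      w ∈ Subfield.closure ((ι '' {a : k | a ^ q ^ g = a}) ∪ {τ ^ n}) := by
    intro w hw
    have h1 : w ∈ (Subfield.closure ((ι '' {a : k | a ^ q = a}) ∪ {τ ^ n}) : Set Δ) := by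
      rw [← hZ]
      exact hw
    refine Subfield.closure_mono (Set.union_subset_union_left _ ?_) h1
    rintro z ⟨a, ha, rfl⟩
    exact ⟨a, hfix a 1 g (by simpa using ha) (Nat.one_dvd g), rfl⟩
  -- commuting lemmas for spans
  have hLcomm : ∀ (T : Set k), ∀ c ∈ Submodule.span (Subring.center Δ) (ι '' T),
      ∀ a : k, c * ι a = ι a * c := by
    intro T c hc a
    refine Submodule.span_induction ?_ ?_ ?_ ?_ hc
    · rintro z ⟨b, hb, rfl⟩
      rw [← map_mul, ← map_mul, mul_comm]
    · rw [zero_mul, mul_zero]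
    · rintro y1 y2 - - h1 h2
      rw [add_mul, mul_add, h1, h2]
    · rintro z y1 - h1
      show (z : Δ) * y1 * ι a = ι a * ((z : Δ) * y1)
      rw [mul_assoc, h1, ← mul_assoc, hcen_comm _ z.2 (ι a), mul_assoc]
  have hLτ : ∀ (d : ℕ), ∀ c ∈ Submodule.span (Subring.center Δ)
        (ι '' {a : k | a ^ q ^ d = a}), τ ^ d * c = c * τ ^ d := by
    intro d c hc
    refine Submodule.span_induction ?_ ?_ ?_ ?_ hc
    · rintro z ⟨b, hb, rfl⟩
      rw [tau_pow_comm ι τ hcomm, hb]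
    · rw [zero_mul, mul_zero]
    · rintro y1 y2 - - h1 h2
      rw [add_mul, mul_add, h1, h2]
    · rintro z y1 - h1
      show τ ^ d * ((z : Δ) * y1) = (z : Δ) * y1 * τ ^ d
      rw [← mul_assoc, ← hcen_comm _ z.2 (τ ^ d), mul_assoc, h1, mul_assoc]
  ext x
  simp only [Set.mem_setOf_eq, SetLike.mem_coe]
  constructor
  · -- hard direction
    rintro ⟨hxA, hxc⟩
    obtain ⟨c, hcL, hcs, hxeq⟩ := mem_repr hq hn0 hk ι τ hcomm hπcen hsn hxA
    -- element of order q^ℓ - 1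
    obtain ⟨ζ, hζ⟩ := IsCyclic.exists_generator (α := kˣ)
    have hordζ : orderOf ζ = q ^ n - 1 := by
      rw [orderOf_eq_card_of_forall_mem_zpowers hζ, Nat.card_eq_fintype_card,
        Fintype.card_units, hk]
    have hqn1 : 1 < q ^ n := Nat.one_lt_pow hn0.ne' hq
    have hqℓ1 : 1 < q ^ ℓ := Nat.one_lt_pow hℓ.ne' hq
    have hdvdN : q ^ ℓ - 1 ∣ q ^ n - 1 := pow_sub_one_dvd_aux hℓn
    have hordb0 : orderOf (ζ ^ ((q ^ n - 1) / (q ^ ℓ - 1))) = q ^ ℓ - 1 := by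
      rw [orderOf_pow, hordζ, Nat.gcd_eq_right (Nat.div_dvd_of_dvd hdvdN)]
      exact Nat.div_div_self hdvdN (by omega)
    set b0u : kˣ := ζ ^ ((q ^ n - 1) / (q ^ ℓ - 1)) with hb0u
    set b0 : k := (b0u : k) with hb0
    have hb0F : b0 ^ q ^ ℓ = b0 := by
      have h1 : b0u ^ (q ^ ℓ - 1) = 1 := by
        rw [← hordb0]
        exact pow_orderOf_eq_one b0u
      have h2 : b0u ^ q ^ ℓ = b0u := by
        have he : q ^ ℓ = (q ^ ℓ - 1) + 1 := by omega
        rw [he, pow_add, h1, pow_one, one_mul]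
      calc b0 ^ q ^ ℓ = ((b0u ^ q ^ ℓ : kˣ) : k) := by rw [Units.val_pow_eq_pow_val]
        _ = b0 := by rw [h2]
    have hb0key : ∀ i : ℕ, b0 ^ q ^ i = b0 → ℓ ∣ i := by
      intro i hi
      have h1 : b0u ^ q ^ i = b0u := Units.ext (by rw [Units.val_pow_eq_pow_val]; exact hi)
      have h2 : b0u ^ (q ^ i - 1) = 1 := by
        have hq1 : 1 ≤ q ^ i := Nat.one_le_pow _ _ (by omega)
        have he : q ^ i = (q ^ i - 1) + 1 := by omega
        rw [he, pow_add, pow_one] at h1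
        have := mul_right_cancel (h1.trans (one_mul b0u).symm)
        exact this
      exact dvd_of_pow_sub_one_dvd hq hℓ (hordb0 ▸ orderOf_dvd_of_pow_eq_one h2)
    -- kill coefficients with ℓ ∤ i
    have hb0A : ι b0 ∈ Subfield.closure ((ι '' {a : k | a ^ q ^ ℓ = a}) ∪ {τ ^ s}) :=
      Subfield.subset_closure (Or.inl ⟨b0, hb0F, rfl⟩)
    have hcomm_b0 := hxc (ι b0) hb0A
    have hdiff : ∑ i : Fin n, (c i * (ι (b0 ^ q ^ (i : ℕ)) - ι b0)) * τ ^ (i : ℕ) = 0 := by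
      have e1 : x * ι b0 = ∑ i : Fin n, c i * ι (b0 ^ q ^ (i : ℕ)) * τ ^ (i : ℕ) := by
        rw [hxeq, Finset.sum_mul]
        refine Finset.sum_congr rfl fun i _ => ?_
        rw [mul_assoc, tau_pow_comm ι τ hcomm, ← mul_assoc]
      have e2 : ι b0 * x = ∑ i : Fin n, c i * ι b0 * τ ^ (i : ℕ) := by
        rw [hxeq, Finset.mul_sum]
        refine Finset.sum_congr rfl fun i _ => ?_
        rw [← mul_assoc, ← hLcomm _ (c i) (hcL i) b0]
      have e3 : x * ι b0 - ι b0 * x = 0 := by rw [hcomm_b0, sub_self]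
      rw [e1, e2, ← Finset.sum_sub_distrib] at e3
      rw [← e3]
      refine Finset.sum_congr rfl fun i _ => ?_
      rw [mul_sub, sub_mul]
    have hkill : ∀ i : Fin n, c i * (ι (b0 ^ q ^ (i : ℕ)) - ι b0) = 0 := by
      refine extract hq hn0 hk ι τ hτ hcomm _ (fun i a => ?_) hdiff
      have hA : (ι (b0 ^ q ^ (i : ℕ)) - ι b0) * ι a = ι a * (ι (b0 ^ q ^ (i : ℕ)) - ι b0) := by
        rw [sub_mul, mul_sub, ← map_mul, ← map_mul, ← map_mul, ← map_mul,
          mul_comm a (b0 ^ q ^ (i : ℕ)), mul_comm a b0]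
      calc c i * (ι (b0 ^ q ^ (i : ℕ)) - ι b0) * ι a
          = c i * ((ι (b0 ^ q ^ (i : ℕ)) - ι b0) * ι a) := by rw [mul_assoc]
        _ = c i * (ι a * (ι (b0 ^ q ^ (i : ℕ)) - ι b0)) := by rw [hA]
        _ = c i * ι a * (ι (b0 ^ q ^ (i : ℕ)) - ι b0) := by rw [mul_assoc]
        _ = ι a * c i * (ι (b0 ^ q ^ (i : ℕ)) - ι b0) := by rw [hLcomm _ (c i) (hcL i) a]
        _ = ι a * (c i * (ι (b0 ^ q ^ (i : ℕ)) - ι b0)) := by rw [mul_assoc]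
    have hsupp : ∀ i : Fin n, ¬ (ℓ ∣ (i : ℕ)) → c i = 0 := by
      intro i hi
      have h2 : ι (b0 ^ q ^ (i : ℕ)) - ι b0 ≠ 0 := by
        rw [sub_ne_zero]
        intro hEq
        exact hi (hb0key _ (ι.injective hEq))
      exact (mul_eq_zero.mp (hkill i)).resolve_right h2
    have hx0 : x = c 0 := by
      rw [hxeq]
      rw [Finset.sum_eq_single 0 (fun i _ hne => ?_) (fun h => absurd (Finset.mem_univ _) h)]
      · simp
      · rcases em (s ∣ (i : ℕ)) with hsi | hsi
        · rcases em (ℓ ∣ (i : ℕ)) with hli | hli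
          · exfalso
            have hni : n ∣ (i : ℕ) := by
              conv_lhs => rw [hn]
              exact Nat.lcm_dvd hli hsi
            have : (i : ℕ) = 0 := Nat.eq_zero_of_dvd_of_lt hni i.isLt
            exact hne (Fin.ext this)
          · rw [hsupp i hli, zero_mul]
        · rw [hcs i hsi, zero_mul]
    have hxL : x ∈ Submodule.span (Subring.center Δ) (ι '' {a : k | a ^ q ^ ℓ = a}) :=
      hx0 ▸ hcL 0
    have hxτs : τ ^ s * x = x * τ ^ s :=
      hxc (τ ^ s) (Subfield.subset_closure (Or.inr rfl))
    have hxτℓ : τ ^ ℓ * x = x * τ ^ ℓ := hLτ ℓ x hxL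
    -- commute with τ^g via Bezout
    have hxτg : τ ^ g * x = x * τ ^ g := by
      set T : Δˣ := Units.mk0 τ hτ with hT
      have hTval : ∀ m : ℕ, ((T ^ m : Δˣ) : Δ) = τ ^ m := fun m => by
        rw [Units.val_pow_eq_pow_val, hT, Units.val_mk0]
      set Gx : Subgroup Δˣ :=
        { carrier := {w : Δˣ | (w : Δ) * x = x * (w : Δ)},
          one_mem' := by simp,
          mul_mem' := by
            intro a b ha hb
            show ((a * b : Δˣ) : Δ) * x = x * ((a * b : Δˣ) : Δ)
            rw [Units.val_mul, mul_assoc, hb, ← mul_assoc, ha, mul_assoc],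
          inv_mem' := by
            intro a ha
            have h1 : (a : Δ) * x = x * (a : Δ) := ha
            show ((a⁻¹ : Δˣ) : Δ) * x = x * ((a⁻¹ : Δˣ) : Δ)
            calc ((a⁻¹ : Δˣ) : Δ) * x
                = ((a⁻¹ : Δˣ) : Δ) * (x * (a : Δ)) * ((a⁻¹ : Δˣ) : Δ) := by
                  rw [mul_assoc, mul_assoc, Units.mul_inv, mul_one]
              _ = ((a⁻¹ : Δˣ) : Δ) * ((a : Δ) * x) * ((a⁻¹ : Δˣ) : Δ) := by rw [← h1]
              _ = x * ((a⁻¹ : Δˣ) : Δ) := by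
                  rw [← mul_assoc, Units.inv_mul, one_mul] } with hGx
      have hTl : T ^ ℓ ∈ Gx := by
        show ((T ^ ℓ : Δˣ) : Δ) * x = x * ((T ^ ℓ : Δˣ) : Δ)
        rw [hTval]
        exact hxτℓ
      have hTs : T ^ s ∈ Gx := by
        show ((T ^ s : Δˣ) : Δ) * x = x * ((T ^ s : Δˣ) : Δ)
        rw [hTval]
        exact hxτs
      have hbez : (g : ℤ) = ℓ * Nat.gcdA ℓ s + s * Nat.gcdB ℓ s := by
        rw [hg]; exact Nat.gcd_eq_gcd_ab ℓ s
      have h1 : T ^ (ℓ : ℤ) ∈ Gx := by rw [zpow_natCast]; exact hTl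
      have h2 : T ^ (s : ℤ) ∈ Gx := by rw [zpow_natCast]; exact hTs
      have h3 : T ^ (g : ℤ) ∈ Gx := by
        rw [hbez, zpow_add, zpow_mul, zpow_mul]
        exact Gx.mul_mem (Gx.zpow_mem h1 _) (Gx.zpow_mem h2 _)
      rw [zpow_natCast] at h3
      have h4 : ((T ^ g : Δˣ) : Δ) * x = x * ((T ^ g : Δˣ) : Δ) := h3
      rwa [hTval] at h4
    -- characteristic and Frobenius additivity
    have hmn : g * (n / g) = n := Nat.mul_div_cancel' hgn
    set m : ℕ := n / g with hmdef
    have hm0 : 0 < m := by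
      rcases Nat.eq_zero_or_pos m with h0 | h0
      · rw [h0, mul_zero] at hmn
        omega
      · exact h0
    haveI : CharP k (ringChar k) := ringChar.charP k
    obtain ⟨d, hpprime, hcard⟩ := FiniteField.card k (ringChar k)
    haveI : Fact (Nat.Prime (ringChar k)) := ⟨hpprime⟩
    have hqn_eq : q ^ n = (ringChar k) ^ (d : ℕ) := by rw [← hk, hcard]
    obtain ⟨e, hqpe⟩ : ∃ e, q = (ringChar k) ^ e := by
      refine ⟨_, Nat.eq_prime_pow_of_unique_prime_dvd (by omega) ?_⟩
      intro r hr hrq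
      have hd : r ∣ (ringChar k) ^ (d : ℕ) := by
        rw [← hqn_eq]
        exact hrq.trans (dvd_pow_self q hn0.ne')
      exact (Nat.prime_dvd_prime_iff_eq hr hpprime).mp (hr.dvd_of_dvd_pow hd)
    have hadd : ∀ (t : ℕ) (a b : k), (a + b) ^ q ^ t = a ^ q ^ t + b ^ q ^ t := by
      intro t a b
      rw [hqpe, ← pow_mul]
      exact add_pow_char_pow a b (ringChar k) (e * t)
    have hsum_pow : ∀ (t : ℕ) (S : Finset ℕ) (f : ℕ → k),
        (∑ j ∈ S, f j) ^ q ^ t = ∑ j ∈ S, (f j) ^ q ^ t := by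
      intro t S f
      induction S using Finset.induction with
      | empty =>
        rw [Finset.sum_empty, Finset.sum_empty, zero_pow (pow_pos (by omega : 0 < q) t).ne']
      | insert a S hni ih => rw [Finset.sum_insert hni, hadd t, ih, Finset.sum_insert hni]
    -- trace to F_g
    have hTgF : ∀ u : k, (∑ j ∈ Finset.range m, u ^ q ^ (g * j)) ^ q ^ g
        = ∑ j ∈ Finset.range m, u ^ q ^ (g * j) := by
      intro u
      rw [hsum_pow]
      have e1 : ∀ j : ℕ, (u ^ q ^ (g * j)) ^ q ^ g = u ^ q ^ (g * (j + 1)) := by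
        intro j
        rw [← pow_mul, ← pow_add, mul_add, mul_one]
      rw [Finset.sum_congr rfl fun j _ => e1 j]
      have e2 : u ^ q ^ (g * m) = u ^ q ^ (g * 0) := by
        rw [hmn, mul_zero, pow_zero, pow_one, ← hk]
        exact FiniteField.pow_card u
      have h5 := Finset.sum_range_succ' (fun j => u ^ q ^ (g * j)) m
      have h6 := Finset.sum_range_succ (fun j => u ^ q ^ (g * j)) m
      rw [h6] at h5
      rw [e2] at h5
      exact (add_right_cancel h5.symm)
    have hTgne : ∃ u : k, (∑ j ∈ Finset.range m, u ^ q ^ (g * j)) ≠ 0 := by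
      by_contra hcon
      push_neg at hcon
      have harith : g * (m - 1) + g = n := by
        have h7 : g * (m - 1) + g = g * ((m - 1) + 1) := by ring
        rw [h7, Nat.sub_add_cancel hm0, hmn]
      have hdeg : (∑ j ∈ Finset.range m, (Polynomial.X : Polynomial k) ^ q ^ (g * j)).natDegree
          < Fintype.card k := by
        rw [hk]
        refine lt_of_le_of_lt (Polynomial.natDegree_sum_le_of_forall_le _ _
          (fun j hj => ?_)) (show q ^ (g * (m - 1)) < q ^ n from
            Nat.pow_lt_pow_right hq (by omega))
        rw [Polynomial.natDegree_X_pow]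
        exact Nat.pow_le_pow_right (by omega)
          (Nat.mul_le_mul_left g (by have := Finset.mem_range.mp hj; omega))
      have hP0 : (∑ j ∈ Finset.range m, (Polynomial.X : Polynomial k) ^ q ^ (g * j)) = 0 := by
        refine Polynomial.eq_zero_of_natDegree_lt_card_of_eval_eq_zero _
          (Function.injective_id) (fun u => ?_) hdeg
        rw [Polynomial.eval_finset_sum]
        simpa using hcon u
      have hcoeff : (∑ j ∈ Finset.range m,
          (Polynomial.X : Polynomial k) ^ q ^ (g * j)).coeff (q ^ (g * (m - 1))) = 1 := by
        rw [Polynomial.finset_sum_coeff]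
        rw [Finset.sum_congr rfl fun j _ => Polynomial.coeff_X_pow (q ^ (g * j)) _]
        have hiff : ∀ j ∈ Finset.range m,
            (if q ^ (g * (m - 1)) = q ^ (g * j) then (1 : k) else 0)
            = if j = m - 1 then 1 else 0 := by
          intro j hj
          by_cases hje : j = m - 1
          · rw [hje, if_pos rfl, if_pos rfl]
          · rw [if_neg, if_neg hje]
            intro hEq
            have := Nat.pow_right_injective (by omega : 2 ≤ q) hEq.symm
            exact hje (by
              have hg' : 0 < g := hg0
              exact Nat.eq_of_mul_eq_mul_left hg' this)
        rw [Finset.sum_congr rfl hiff, Finset.sum_ite_eq' (Finset.range m) (m - 1)]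
        rw [if_pos (Finset.mem_range.mpr (by omega))]
      rw [hP0, Polynomial.coeff_zero] at hcoeff
      exact one_ne_zero hcoeff.symm
    obtain ⟨u, hu⟩ := hTgne
    -- the averaging operator
    have hxτgt : ∀ t : ℕ, τ ^ (g * t) * x = x * τ ^ (g * t) := by
      intro t
      rw [pow_mul]
      exact (Commute.pow_left (hxτg : Commute (τ ^ g) x) t : _)
    have hgeom : ∀ j : ℕ, j < m → g * j + g * (m - j) = n := by
      intro j hj
      rw [← Nat.mul_add, Nat.add_sub_cancel' (le_of_lt hj), hmn]
    have hEx : (∑ j ∈ Finset.range m, τ ^ (g * j) * (ι u * x) * τ ^ (g * (m - j)))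
        = ι (∑ j ∈ Finset.range m, u ^ q ^ (g * j)) * x * τ ^ n := by
      have hterm : ∀ j ∈ Finset.range m,
          τ ^ (g * j) * (ι u * x) * τ ^ (g * (m - j))
          = ι (u ^ q ^ (g * j)) * x * τ ^ n := by
        intro j hj
        calc τ ^ (g * j) * (ι u * x) * τ ^ (g * (m - j))
            = (τ ^ (g * j) * ι u) * x * τ ^ (g * (m - j)) := by rw [← mul_assoc]
          _ = ι (u ^ q ^ (g * j)) * (τ ^ (g * j) * x) * τ ^ (g * (m - j)) := by
              rw [tau_pow_comm ι τ hcomm, mul_assoc _ _ x]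
          _ = ι (u ^ q ^ (g * j)) * (x * τ ^ (g * j)) * τ ^ (g * (m - j)) := by
              rw [hxτgt j]
          _ = ι (u ^ q ^ (g * j)) * x * (τ ^ (g * j) * τ ^ (g * (m - j))) := by
              simp only [mul_assoc]
          _ = ι (u ^ q ^ (g * j)) * x * τ ^ n := by
              rw [← pow_add, hgeom j (Finset.mem_range.mp hj)]
      rw [Finset.sum_congr rfl hterm, ← Finset.sum_mul, ← Finset.sum_mul, ← map_sum]
    have hEZ : ∀ y, y ∈ Submodule.span (Subring.center Δ) (ι '' {a : k | a ^ q ^ ℓ = a}) →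
        (∑ j ∈ Finset.range m, τ ^ (g * j) * (ι u * y) * τ ^ (g * (m - j)))
          ∈ Subfield.closure ((ι '' {a : k | a ^ q ^ g = a}) ∪ {τ ^ n}) := by
      intro y hy
      refine Submodule.span_induction ?_ ?_ ?_ ?_ hy
      · rintro w ⟨b, hb, rfl⟩
        have hterm : ∀ j ∈ Finset.range m,
            τ ^ (g * j) * (ι u * ι b) * τ ^ (g * (m - j))
            = ι ((u * b) ^ q ^ (g * j)) * τ ^ n := by
          intro j hj
          calc τ ^ (g * j) * (ι u * ι b) * τ ^ (g * (m - j))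
              = (τ ^ (g * j) * ι (u * b)) * τ ^ (g * (m - j)) := by rw [← map_mul]
            _ = (ι ((u * b) ^ q ^ (g * j)) * τ ^ (g * j)) * τ ^ (g * (m - j)) := by
                rw [tau_pow_comm ι τ hcomm]
            _ = ι ((u * b) ^ q ^ (g * j)) * (τ ^ (g * j) * τ ^ (g * (m - j))) := by
                rw [mul_assoc]
            _ = ι ((u * b) ^ q ^ (g * j)) * τ ^ n := by
                rw [← pow_add, hgeom j (Finset.mem_range.mp hj)]
        rw [Finset.sum_congr rfl hterm, ← Finset.sum_mul, ← map_sum]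
        have hmem : (∑ j ∈ Finset.range m, (u * b) ^ q ^ (g * j)) ∈ {a : k | a ^ q ^ g = a} :=
          hTgF (u * b)
        exact Subfield.mul_mem _ (Subfield.subset_closure (Or.inl ⟨_, hmem, rfl⟩))
          (Subfield.subset_closure (Or.inr rfl))
      · simpa using Subfield.zero_mem _
      · rintro y1 y2 - - h1 h2
        have : (∑ j ∈ Finset.range m, τ ^ (g * j) * (ι u * (y1 + y2)) * τ ^ (g * (m - j)))
            = (∑ j ∈ Finset.range m, τ ^ (g * j) * (ι u * y1) * τ ^ (g * (m - j)))
            + (∑ j ∈ Finset.range m, τ ^ (g * j) * (ι u * y2) * τ ^ (g * (m - j))) := by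
          rw [← Finset.sum_add_distrib]
          refine Finset.sum_congr rfl fun j _ => ?_
          rw [mul_add, mul_add, add_mul]
        rw [this]
        exact Subfield.add_mem _ h1 h2
      · rintro z y1 - h1
        have hz := hcen_comm _ z.2
        have hzc : ∀ w w' : Δ, w * ((z : Δ) * w') = (z : Δ) * (w * w') := fun w w' => by
          rw [← mul_assoc, ← hz w, mul_assoc]
        show (∑ j ∈ Finset.range m, τ ^ (g * j) * (ι u * ((z : Δ) * y1)) * τ ^ (g * (m - j)))
          ∈ Subfield.closure ((ι '' {a : k | a ^ q ^ g = a}) ∪ {τ ^ n})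
        have : (∑ j ∈ Finset.range m, τ ^ (g * j) * (ι u * ((z : Δ) * y1)) * τ ^ (g * (m - j)))
            = (z : Δ) * ∑ j ∈ Finset.range m, τ ^ (g * j) * (ι u * y1) * τ ^ (g * (m - j)) := by
          rw [Finset.mul_sum]
          refine Finset.sum_congr rfl fun j _ => ?_
          simp only [mul_assoc]
          rw [hzc (ι u), hzc (τ ^ (g * j))]
        rw [this]
        exact Subfield.mul_mem _ (hCZ _ z.2) h1
    have hExZ : ι (∑ j ∈ Finset.range m, u ^ q ^ (g * j)) * x * τ ^ n
        ∈ Subfield.closure ((ι '' {a : k | a ^ q ^ g = a}) ∪ {τ ^ n}) := by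
      rw [← hEx]
      exact hEZ x hxL
    have hιTg : ι (∑ j ∈ Finset.range m, u ^ q ^ (g * j))
        ∈ Subfield.closure ((ι '' {a : k | a ^ q ^ g = a}) ∪ {τ ^ n}) :=
      Subfield.subset_closure (Or.inl ⟨_, hTgF u, rfl⟩)
    have hτnZ : (τ ^ n : Δ) ∈ Subfield.closure ((ι '' {a : k | a ^ q ^ g = a}) ∪ {τ ^ n}) :=
      Subfield.subset_closure (Or.inr rfl)
    have hιTgne : ι (∑ j ∈ Finset.range m, u ^ q ^ (g * j)) ≠ 0 := by
      intro h0
      exact hu (ι.injective (by rw [h0, map_zero]))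
    have hτnne : (τ ^ n : Δ) ≠ 0 := pow_ne_zero _ hτ
    have hxeq2 : x = (ι (∑ j ∈ Finset.range m, u ^ q ^ (g * j)))⁻¹
        * (ι (∑ j ∈ Finset.range m, u ^ q ^ (g * j)) * x * τ ^ n) * (τ ^ n)⁻¹ := by
      rw [← mul_assoc, ← mul_assoc, inv_mul_cancel₀ hιTgne, one_mul,
        mul_assoc, mul_inv_cancel₀ hτnne, mul_one]
    rw [hxeq2]
    exact Subfield.mul_mem _ (Subfield.mul_mem _ (Subfield.inv_mem _ hιTg) hExZ)
      (Subfield.inv_mem _ hτnZ)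
  · -- easy direction
    intro hxZ
    have hZA : Subfield.closure ((ι '' {a : k | a ^ q ^ g = a}) ∪ {τ ^ n}) ≤
        Subfield.closure ((ι '' {a : k | a ^ q ^ ℓ = a}) ∪ {τ ^ s}) := by
      rw [Subfield.closure_le]
      rintro z (⟨a, ha, rfl⟩ | hz)
      · exact Subfield.subset_closure (Or.inl ⟨a, hfix a g ℓ ha hgℓ, rfl⟩)
      · rw [Set.mem_singleton_iff] at hz
        subst hz
        obtain ⟨t, ht⟩ := hsn
        rw [SetLike.mem_coe, ht, pow_mul]
        have hτsA : τ ^ s ∈ Subfield.closure ((ι '' {a : k | a ^ q ^ ℓ = a}) ∪ {τ ^ s}) :=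
          Subfield.subset_closure (Or.inr rfl)
        exact Subfield.pow_mem _ hτsA t
    refine ⟨hZA hxZ, ?_⟩
    intro y hyA
    have hZy : Subfield.closure ((ι '' {a : k | a ^ q ^ g = a}) ∪ {τ ^ n}) ≤
        centralizerSubfield y := by
      rw [Subfield.closure_le]
      rintro z (⟨a, ha, rfl⟩ | hz)
      · have hA_cent : Subfield.closure ((ι '' {a : k | a ^ q ^ ℓ = a}) ∪ {τ ^ s}) ≤
            centralizerSubfield (ι a) := by
          rw [Subfield.closure_le]
          rintro w (⟨b, hb, rfl⟩ | hw)
          · show ι b * ι a = ι a * ι b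
            rw [← map_mul, ← map_mul, mul_comm]
          · rw [Set.mem_singleton_iff] at hw
            subst hw
            show τ ^ s * ι a = ι a * τ ^ s
            rw [tau_pow_comm ι τ hcomm, hfix a g s ha hgs]
        have h1 : y * ι a = ι a * y := hA_cent hyA
        exact h1.symm
      · rw [Set.mem_singleton_iff] at hz
        subst hz
        exact (hτn_comm y).symm
    exact (hZy hxZ).symm
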